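/- Let p, q be distinct odd primes with gcd(p-1,q-1)=4, and let E(X) = Σ_{u=0}^{pq-1} e_u X^u where e_u = 2 if u mod pq ∈ Q∪{0}, e_u = 0 if u mod pq ∈ P, and e_u = i if u mod pq ∈ D_i, with P = {p, 2p, ..., (q-1)p} and Q = {q, 2q, ..., (p-1)q}. Then E(4) ≡ 2p (mod 3); in particular 3 does not divide E(4). -/

import Mathlib

set_option maxHeartbeats 1000000


theorem E_four_mod_three (p q g h : ℕ) (hp : p.Prime) (hq : q.Prime)
    (hop : Odd p) (hoq : Odd q) (hne : p ≠ q)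
    (hgcd : Nat.gcd (p - 1) (q - 1) = 4)
    (hgp : orderOf (g : ZMod p) = p - 1)
    (hgq : orderOf (g : ZMod q) = q - 1)
    (hhp : h ≡ g [MOD p]) (hhq : h ≡ 1 [MOD q])
    (D : ℕ → Set (ZMod (p * q)))
    (hD : ∀ i, D i = {x : ZMod (p * q) | ∃ s < (p - 1) * (q - 1) / 4,
        x = (g : ZMod (p * q)) ^ s * (h : ZMod (p * q)) ^ i})
    (e : ℕ → ℕ)
    (he2 : ∀ u < p * q, q ∣ u → e u = 2)
    (he0 : ∀ u < p * q, p ∣ u → ¬ q ∣ u → e u = 0)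
    (heD : ∀ u < p * q, ∀ i < 4, (u : ZMod (p * q)) ∈ D i → e u = i) :
    (∑ u ∈ Finset.range (p * q), e u * 4 ^ u) ≡ 2 * p [MOD 3] ∧
      ¬ 3 ∣ ∑ u ∈ Finset.range (p * q), e u * 4 ^ u := by
  classical
  have hp1 : 4 ∣ p - 1 := hgcd ▸ Nat.gcd_dvd_left _ _
  have hq1 : 4 ∣ q - 1 := hgcd ▸ Nat.gcd_dvd_right _ _
  have hp2 : 2 ≤ p := hp.two_le
  have hq2 : 2 ≤ q := hq.two_le
  have hp5 : 5 ≤ p := by rcases hp1 with ⟨k, hk⟩; omega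
  have hq5 : 5 ≤ q := by rcases hq1 with ⟨k, hk⟩; omega
  have hN0 : 0 < p * q := by positivity
  haveI : NeZero (p * q) := ⟨by omega⟩
  set d : ℕ := Nat.lcm (p - 1) (q - 1) with hd
  have h4d : 4 * d = (p - 1) * (q - 1) := by rw [← hgcd, hd]; exact Nat.gcd_mul_lcm _ _
  have hDd : (p - 1) * (q - 1) / 4 = d := by rw [← h4d, Nat.mul_div_cancel_left _ (by norm_num)]
  have hd0 : 0 < d := Nat.pos_of_ne_zero (Nat.lcm_ne_zero (by omega) (by omega))
  -- g, h are units
  haveI := Fact.mk hp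
  haveI := Fact.mk hq
  have hgp0 : (g : ZMod p) ≠ 0 := by
    intro h0
    have h1 : (g : ZMod p) ^ orderOf (g : ZMod p) = 1 := pow_orderOf_eq_one _
    rw [hgp, h0, zero_pow (by omega)] at h1
    exact zero_ne_one h1
  have hgq0 : (g : ZMod q) ≠ 0 := by
    intro h0
    have h1 : (g : ZMod q) ^ orderOf (g : ZMod q) = 1 := pow_orderOf_eq_one _
    rw [hgq, h0, zero_pow (by omega)] at h1
    exact zero_ne_one h1
  obtain ⟨up, hup⟩ := hgp0.isUnit
  obtain ⟨uq, huq⟩ := hgq0.isUnit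
  have hupo : orderOf up = p - 1 := by rw [← hgp, ← hup, orderOf_units]
  have huqo : orderOf uq = q - 1 := by rw [← hgq, ← huq, orderOf_units]
  have hhpg : (h : ZMod p) = (g : ZMod p) := (ZMod.natCast_eq_natCast_iff _ _ _).mpr hhp
  have hhq1 : (h : ZMod q) = 1 := by
    have := (ZMod.natCast_eq_natCast_iff h 1 q).mpr hhq
    rwa [Nat.cast_one] at this
  have hgP : ¬ p ∣ g := fun hd' => hgp0 ((ZMod.natCast_eq_zero_iff _ _).mpr hd')
  have hgQ : ¬ q ∣ g := fun hd' => hgq0 ((ZMod.natCast_eq_zero_iff _ _).mpr hd')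
  have hhP : ¬ p ∣ h := fun hd' => by
    have := (ZMod.natCast_eq_zero_iff h p).mpr hd'
    rw [hhpg] at this; exact hgp0 this
  have hhQ : ¬ q ∣ h := fun hd' => by
    have := (ZMod.natCast_eq_zero_iff h q).mpr hd'
    rw [hhq1] at this; exact one_ne_zero this
  have hgN : Nat.Coprime g (p * q) :=
    Nat.Coprime.mul_right ((hp.coprime_iff_not_dvd.mpr hgP).symm)
      ((hq.coprime_iff_not_dvd.mpr hgQ).symm)
  have hhN : Nat.Coprime h (p * q) :=
    Nat.Coprime.mul_right ((hp.coprime_iff_not_dvd.mpr hhP).symm)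
      ((hq.coprime_iff_not_dvd.mpr hhQ).symm)
  have hgU : IsUnit (g : ZMod (p * q)) := (ZMod.isUnit_iff_coprime g (p * q)).mpr hgN
  have hhU : IsUnit (h : ZMod (p * q)) := (ZMod.isUnit_iff_coprime h (p * q)).mpr hhN
  -- the map
  set Φ : ℕ × ℕ → ℕ :=
    fun si => ((g : ZMod (p * q)) ^ si.1 * (h : ZMod (p * q)) ^ si.2).val with hΦ
  set T : Finset (ℕ × ℕ) := Finset.range d ×ˢ Finset.range 4 with hT
  set C : Finset ℕ := (Finset.range (p * q)).filter (p * q).Coprime with hC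
  have hxU : ∀ s i : ℕ, IsUnit ((g : ZMod (p * q)) ^ s * (h : ZMod (p * q)) ^ i) :=
    fun s i => (hgU.pow s).mul (hhU.pow i)
  have hΦlt : ∀ si : ℕ × ℕ, Φ si < p * q := fun si => ZMod.val_lt _
  have hΦcop : ∀ si : ℕ × ℕ, (p * q).Coprime (Φ si) := by
    intro si
    obtain ⟨u, hu⟩ := hxU si.1 si.2
    have := ZMod.val_coe_unit_coprime u
    rw [hu] at this
    exact this.symm
  have hΦcast : ∀ si : ℕ × ℕ,
      ((Φ si : ℕ) : ZMod (p * q)) = (g : ZMod (p * q)) ^ si.1 * (h : ZMod (p * q)) ^ si.2 := by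
    intro si
    rw [hΦ]
    simp [ZMod.natCast_val, ZMod.cast_id]
  have hΦe : ∀ si ∈ T, e (Φ si) = si.2 := by
    rintro ⟨s, i⟩ hsi
    rw [hT, Finset.mem_product, Finset.mem_range, Finset.mem_range] at hsi
    refine heD _ (hΦlt _) i hsi.2 ?_
    rw [hD i]
    exact ⟨s, by rw [hDd]; exact hsi.1, hΦcast (s, i)⟩
  -- injectivity
  have hinj : Set.InjOn Φ T := by
    rintro ⟨s, i⟩ hsi ⟨t, j⟩ htj heq
    rw [hT, Finset.coe_product] at hsi htj
    simp only [Set.mem_prod, Finset.coe_range, Set.mem_Iio] at hsi htj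
    have hxy : (g : ZMod (p * q)) ^ s * (h : ZMod (p * q)) ^ i
        = (g : ZMod (p * q)) ^ t * (h : ZMod (p * q)) ^ j := by
      rw [← hΦcast (s, i), ← hΦcast (t, j)]; exact congrArg _ heq
    -- reduce mod p
    have hmodp : s + i ≡ t + j [MOD p - 1] := by
      have h1 := congrArg (ZMod.castHom (dvd_mul_right p q) (ZMod p)) hxy
      simp only [map_mul, map_pow, map_natCast] at h1
      rw [hhpg, ← pow_add, ← pow_add, ← hup] at h1
      have h2 : up ^ (s + i) = up ^ (t + j) := Units.ext (by
        rw [Units.val_pow_eq_pow_val, Units.val_pow_eq_pow_val]; exact h1)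
      rwa [pow_eq_pow_iff_modEq, hupo] at h2
    have hmodq : s ≡ t [MOD q - 1] := by
      have h1 := congrArg (ZMod.castHom (dvd_mul_left q p) (ZMod q)) hxy
      simp only [map_mul, map_pow, map_natCast] at h1
      rw [hhq1, one_pow, one_pow, mul_one, mul_one, ← huq] at h1
      have h2 : uq ^ s = uq ^ t := Units.ext (by
        rw [Units.val_pow_eq_pow_val, Units.val_pow_eq_pow_val]; exact h1)
      rwa [pow_eq_pow_iff_modEq, huqo] at h2
    have dp : ((p - 1 : ℕ) : ℤ) ∣ ((t : ℤ) + j) - ((s : ℤ) + i) := by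
      have := hmodp.dvd; push_cast at this; exact this
    have dq : ((q - 1 : ℕ) : ℤ) ∣ (t : ℤ) - s := by
      have := hmodq.dvd; push_cast at this; exact this
    have h4p : (4 : ℤ) ∣ ((p - 1 : ℕ) : ℤ) := Int.natCast_dvd_natCast.mpr hp1
    have h4q : (4 : ℤ) ∣ ((q - 1 : ℕ) : ℤ) := Int.natCast_dvd_natCast.mpr hq1
    have hij : i = j := by
      have d1 : (4 : ℤ) ∣ ((t : ℤ) + j) - ((s : ℤ) + i) := h4p.trans dp
      have d2 : (4 : ℤ) ∣ (t : ℤ) - s := h4q.trans dq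
      have hi4 := hsi.2; have hj4 := htj.2
      omega
    subst hij
    have dps : ((p - 1 : ℕ) : ℤ) ∣ (t : ℤ) - s := by
      have heq2 : ((t : ℤ) + i) - ((s : ℤ) + i) = (t : ℤ) - s := by ring
      rwa [heq2] at dp
    have hlcm : ((d : ℕ) : ℤ) ∣ (t : ℤ) - s := by
      have := Int.coe_lcm_dvd_iff.mpr ⟨dps, dq⟩
      rw [Int.lcm] at this
      simpa [Int.natAbs_natCast] using this
    have hst : (t : ℤ) - s = 0 := by
      refine Int.eq_zero_of_abs_lt_dvd hlcm ?_
      rw [abs_lt]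
      constructor <;> [skip; skip] <;>
        · have h1 := hsi.1; have h2 := htj.1; omega
    have : s = t := by omega
    simp [this]
  -- cardinality and image
  have hcardT : T.card = d * 4 := by rw [hT]; simp [Finset.card_product]
  have hcardC : C.card = (p - 1) * (q - 1) := by
    rw [hC]
    have : ((Finset.range (p * q)).filter (p * q).Coprime).card = Nat.totient (p * q) := rfl
    rw [this, Nat.totient_mul ((Nat.coprime_primes hp hq).mpr hne),
      Nat.totient_prime hp, Nat.totient_prime hq]
  have hsub : T.image Φ ⊆ C := by
    intro u hu
    rw [Finset.mem_image] at hu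
    obtain ⟨si, _, rfl⟩ := hu
    rw [hC, Finset.mem_filter, Finset.mem_range]
    exact ⟨hΦlt si, hΦcop si⟩
  have himg : T.image Φ = C := by
    refine Finset.eq_of_subset_of_card_le hsub ?_
    rw [Finset.card_image_of_injOn hinj, hcardT, hcardC]
    omega
  -- sum over C
  have hsumC : ∑ u ∈ C, e u = d * 6 := by
    rw [← himg, Finset.sum_image (fun x hx y hy => hinj hx hy)]
    have : ∑ si ∈ T, e (Φ si) = ∑ si ∈ T, si.2 := Finset.sum_congr rfl hΦe
    rw [this, hT, Finset.sum_product]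
    simp [Finset.sum_range_succ, mul_comm]
  -- split the full sum
  set S : ℕ := ∑ u ∈ Finset.range (p * q), e u with hS
  have hsplit1 : S = (∑ u ∈ (Finset.range (p * q)).filter (q ∣ ·), e u)
      + ∑ u ∈ (Finset.range (p * q)).filter (fun u => ¬ q ∣ u), e u :=
    (Finset.sum_filter_add_sum_filter_not _ _ _).symm
  have hsplit2 : ∑ u ∈ (Finset.range (p * q)).filter (fun u => ¬ q ∣ u), e u
      = (∑ u ∈ ((Finset.range (p * q)).filter (fun u => ¬ q ∣ u)).filter (p ∣ ·), e u)
      + ∑ u ∈ ((Finset.range (p * q)).filter (fun u => ¬ q ∣ u)).filter (fun u => ¬ p ∣ u),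
          e u :=
    (Finset.sum_filter_add_sum_filter_not _ _ _).symm
  have hsumA : ∑ u ∈ (Finset.range (p * q)).filter (q ∣ ·), e u = 2 * p := by
    have hAeq : (Finset.range (p * q)).filter (q ∣ ·) = (Finset.range p).image (· * q) := by
      ext u
      simp only [Finset.mem_filter, Finset.mem_range, Finset.mem_image]
      constructor
      · rintro ⟨hlt, k, rfl⟩
        refine ⟨k, ?_, by ring⟩
        have h1 : q * k < q * p := by rw [mul_comm q p]; exact hlt
        exact Nat.lt_of_mul_lt_mul_left h1
      · rintro ⟨k, hk, rfl⟩
        refine ⟨?_, k, by ring⟩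
        exact Nat.mul_lt_mul_of_lt_of_le hk le_rfl (by omega)
    rw [hAeq, Finset.sum_image (fun a _ b _ hab =>
      Nat.eq_of_mul_eq_mul_right (by omega) hab)]
    have : ∀ k ∈ Finset.range p, e (k * q) = 2 := by
      intro k hk
      rw [Finset.mem_range] at hk
      refine he2 _ ?_ ⟨k, by ring⟩
      exact Nat.mul_lt_mul_of_lt_of_le hk le_rfl (by omega)
    rw [Finset.sum_congr rfl this, Finset.sum_const, Finset.card_range, smul_eq_mul]
    omega
  have hsumB : ∑ u ∈ ((Finset.range (p * q)).filter (fun u => ¬ q ∣ u)).filter (p ∣ ·), e u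
      = 0 := by
    refine Finset.sum_eq_zero ?_
    intro u hu
    simp only [Finset.mem_filter, Finset.mem_range] at hu
    exact he0 u hu.1.1 hu.2 hu.1.2
  have hCeq : ((Finset.range (p * q)).filter (fun u => ¬ q ∣ u)).filter (fun u => ¬ p ∣ u)
      = C := by
    rw [hC]
    ext u
    simp only [Finset.mem_filter, Finset.mem_range]
    constructor
    · rintro ⟨⟨hlt, hqd⟩, hpd⟩
      exact ⟨hlt, Nat.coprime_mul_iff_left.mpr ⟨hp.coprime_iff_not_dvd.mpr hpd,
        hq.coprime_iff_not_dvd.mpr hqd⟩⟩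
    · rintro ⟨hlt, hcop⟩
      have h1 := Nat.Coprime.coprime_dvd_left (dvd_mul_right p q) hcop
      have h2 := Nat.Coprime.coprime_dvd_left (dvd_mul_left q p) hcop
      exact ⟨⟨hlt, hq.coprime_iff_not_dvd.mp h2⟩, hp.coprime_iff_not_dvd.mp h1⟩
  have hStot : S = 2 * p + d * 6 := by
    rw [hsplit1, hsplit2, hsumA, hsumB, hCeq, hsumC]; omega
  -- conclude mod 3
  have hmain : (∑ u ∈ Finset.range (p * q), e u * 4 ^ u) ≡ 2 * p [MOD 3] := by
    rw [← ZMod.natCast_eq_natCast_iff]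
    push_cast
    have h41 : (4 : ZMod 3) = 1 := by decide
    rw [Finset.sum_congr rfl (fun u _ => by rw [h41, one_pow, mul_one])]
    have : (S : ZMod 3) = ((2 * p + d * 6 : ℕ) : ZMod 3) := by rw [hStot]
    push_cast [hS] at this
    rw [this]
    have h60 : (6 : ZMod 3) = 0 := by decide
    rw [h60, mul_zero, add_zero]
  refine ⟨hmain, ?_⟩
  intro hdvd
  have h0 : ((∑ u ∈ Finset.range (p * q), e u * 4 ^ u : ℕ) : ZMod 3) = 0 :=
    (ZMod.natCast_eq_zero_iff _ _).mpr hdvd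
  have h2p : ((2 * p : ℕ) : ZMod 3) = 0 := by
    rw [← (ZMod.natCast_eq_natCast_iff _ _ _).mpr hmain, h0]
  have h3d : (3 : ℕ) ∣ 2 * p := (ZMod.natCast_eq_zero_iff _ _).mp h2p
  have h3p : (3 : ℕ) ∣ p := ((Nat.Prime.dvd_mul (by norm_num)).mp h3d).resolve_left (by norm_num)
  have := (Nat.prime_dvd_prime_iff_eq (by norm_num) hp).mp h3p
  omega
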